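/- Assume 0 < ra < 1/(2s₂), assume the points x_i (defined by x₀ = 1/2 + ra, x₁ = (s₂+2rs₂a)(1/2 + 1/(2s₂) − x₀), x_{i+1} = (s₁+2rs₁a)(x_i − 1/2 + 1/(2s₁)) for i ≥ 1) satisfy x_i ∈ [1/2 − 1/(2s₁), 1/2) for i = 1, …, m−1 and x_m = 1/2 − 1/(2s₁). Then for all real numbers c, α₀, α₁, …, α_m, the function f = c + α₀·1_{I₀} + Σ_{i=1}^m α_i·1_{I_i} on [0,1] satisfies, for almost every x ∈ [0,1], (P_a f)(x) = c' + α₀'·1_{I₀}(x) + Σ_{i=1}^m α_i'·1_{I_i}(x), where the column vector (c', α₀', α₁', …, α_m') equals A_m applied to the column vector (c, α₀, α₁, …, α_m). -/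

import Mathlib

set_option maxHeartbeats 1000000


open MeasureTheory
open Fin.NatCast

/-- The orbit of the point 1/2 + ra under the perturbed W-shaped map W_a. -/
noncomputable def orbitW (s₁ s₂ r a : ℝ) : ℕ → ℝ
  | 0 => 1 / 2 + r * a
  | 1 => (s₂ + 2 * r * s₂ * a) * (1 / 2 + 1 / (2 * s₂) - (1 / 2 + r * a))
  | (n + 2) => (s₁ + 2 * r * s₁ * a) * (orbitW s₁ s₂ r a (n + 1) - 1 / 2 + 1 / (2 * s₁))

/-- The Perron–Frobenius operator P_a of the map W_a. -/
noncomputable def Pa (s₁ s₂ r a : ℝ) (f : ℝ → ℝ) (x : ℝ) : ℝ :=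
  (1 / (2 * s₂)) * f ((1 - x) / (2 * s₂)) +
  (1 / (s₁ + 2 * r * s₁ * a)) * f (x / (s₁ + 2 * r * s₁ * a) + 1 / 2 - 1 / (2 * s₁)) *
    (Set.Icc (0 : ℝ) (1 / 2 + r * a)).indicator (fun _ => (1 : ℝ)) x +
  (1 / (s₂ + 2 * r * s₂ * a)) * f (1 / 2 + 1 / (2 * s₂) - x / (s₂ + 2 * r * s₂ * a)) *
    (Set.Icc (0 : ℝ) (1 / 2 + r * a)).indicator (fun _ => (1 : ℝ)) x +
  (1 / (2 * s₁)) * f ((x - 1) / (2 * s₁) + 1)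

/-- The (m+2)×(m+2) matrix A_m from the paper, rows/columns indexed 0,…,m+1. -/
noncomputable def Amat (s₁ s₂ r a : ℝ) (m : ℕ) : Matrix (Fin (m + 2)) (Fin (m + 2)) ℝ :=
  Matrix.of fun i j =>
    if i.val = 0 then
      (if j.val = 0 then 1 / 2 else if j.val = 1 then 1 / (2 * s₂) else 0)
    else if i.val = 1 then
      (if j.val = 0 then 1 / (1 + 2 * r * a)
       else if j.val = 1 ∨ j.val = m + 1 then 1 / (s₁ + 2 * r * s₁ * a) else 0)
    else if i.val = 2 then
      (if 1 ≤ j.val then 1 / (s₂ + 2 * r * s₂ * a) else 0)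
    else
      (if j.val + 1 = i.val then 1 / (s₁ + 2 * r * s₁ * a) else 0)

private lemma ind_one {A b y : ℝ} (h1 : A ≤ y) (h2 : y ≤ b) :
    (Set.Icc A b).indicator (fun _ => (1 : ℝ)) y = 1 :=
  Set.indicator_of_mem (Set.mem_Icc.mpr ⟨h1, h2⟩) _

private lemma ind_zero_left {A b y : ℝ} (h : y < A) :
    (Set.Icc A b).indicator (fun _ => (1 : ℝ)) y = 0 :=
  Set.indicator_of_notMem (fun hy => absurd (Set.mem_Icc.mp hy).1 (not_le.2 h)) _

private lemma ind_zero_right {A b y : ℝ} (h : b < y) :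
    (Set.Icc A b).indicator (fun _ => (1 : ℝ)) y = 0 :=
  Set.indicator_of_notMem (fun hy => absurd (Set.mem_Icc.mp hy).2 (not_le.2 h)) _

private lemma ind_congr {A b A' b' y y' : ℝ} (h : (A ≤ y ∧ y ≤ b) ↔ (A' ≤ y' ∧ y' ≤ b')) :
    (Set.Icc A b).indicator (fun _ => (1 : ℝ)) y
      = (Set.Icc A' b').indicator (fun _ => (1 : ℝ)) y' := by
  simp only [Set.indicator_apply, Set.mem_Icc]
  exact if_congr h rfl rfl

private lemma sum_fin_split (m : ℕ) (v : Fin (m+2) → ℝ) :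
    ∑ j : Fin (m+2), v j = v 0 + v 1 + ∑ i ∈ Finset.Icc 1 m, v ((i+1 : ℕ)) := by
  rw [Fin.sum_univ_succ, Fin.sum_univ_succ]
  have h1 : ∀ j : Fin m, v j.succ.succ = v (((j:ℕ)+2 : ℕ)) := by
    intro j
    congr 1
    apply Fin.ext
    rw [Fin.val_cast_of_lt (show (j:ℕ)+2 < m+2 by omega)]
    simp
  have h2 : ∑ i : Fin m, v i.succ.succ = ∑ i ∈ Finset.Icc 1 m, v ((i+1 : ℕ)) := by
    rw [Finset.sum_congr rfl (fun j _ => h1 j),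
        Fin.sum_univ_eq_sum_range (fun k => v ((k+2 : ℕ))) m]
    refine Finset.sum_nbij' (fun i => i+1) (fun j => j-1) ?_ ?_ ?_ ?_ ?_ <;> intro a ha
    · simp_all
    · simp_all; omega
    · show a + 1 - 1 = a; omega
    · show a - 1 + 1 = a; simp at ha; omega
    · simp only []
  rw [h2, show (Fin.succ 0 : Fin (m+2)) = 1 from rfl]
  ring

theorem stmt_4 (s₁ s₂ r a : ℝ) (hs₁ : 1 < s₁) (hs₂ : 1 < s₂)
    (hsum : 1 / s₁ + 1 / s₂ = 1) (hr : 0 < r) (ha : 0 < a)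
    (hra : r * a < 1 / (2 * s₂)) (m : ℕ) (hm : 1 ≤ m)
    (horbit : ∀ i : ℕ, 1 ≤ i → i ≤ m - 1 →
      orbitW s₁ s₂ r a i ∈ Set.Ico (1 / 2 - 1 / (2 * s₁)) (1 / 2))
    (horbitm : orbitW s₁ s₂ r a m = 1 / 2 - 1 / (2 * s₁)) :
    ∀ w : Fin (m + 2) → ℝ,
      ∀ᵐ x ∂(volume.restrict (Set.Icc (0 : ℝ) 1)),
        Pa s₁ s₂ r a
          (fun y => w 0 +
            w 1 * (Set.Icc (0 : ℝ) (1 / 2 + r * a)).indicator (fun _ => (1 : ℝ)) y +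
            ∑ i ∈ Finset.Icc 1 m, w ((i + 1 : ℕ)) *
              (Set.Icc (orbitW s₁ s₂ r a i) (1 / 2 + r * a)).indicator (fun _ => (1 : ℝ)) y)
          x
        = ((Amat s₁ s₂ r a m).mulVec w) 0 +
          ((Amat s₁ s₂ r a m).mulVec w) 1 *
            (Set.Icc (0 : ℝ) (1 / 2 + r * a)).indicator (fun _ => (1 : ℝ)) x +
          ∑ i ∈ Finset.Icc 1 m, ((Amat s₁ s₂ r a m).mulVec w) ((i + 1 : ℕ)) *
            (Set.Icc (orbitW s₁ s₂ r a i) (1 / 2 + r * a)).indicator (fun _ => (1 : ℝ)) x := by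
  intro w
  obtain ⟨m', rfl⟩ : ∃ m', m = m' + 1 := ⟨m - 1, by omega⟩
  -- basic positivity and algebraic facts
  have hs₁0 : (0:ℝ) < s₁ := by linarith
  have hs₂0 : (0:ℝ) < s₂ := by linarith
  have hra0 : (0:ℝ) < r * a := mul_pos hr ha
  have hd₁ : (0:ℝ) < s₁ + 2 * r * s₁ * a := by nlinarith
  have hd₂ : (0:ℝ) < s₂ + 2 * r * s₂ * a := by nlinarith
  have h2s₁ : (0:ℝ) < 2 * s₁ := by linarith
  have h2s₂ : (0:ℝ) < 2 * s₂ := by linarith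
  have key : (1:ℝ)/(2*s₂) = 1/2 - 1/(2*s₁) := by
    have h : (1:ℝ)/s₂ = 1 - 1/s₁ := by linarith
    rw [show (1:ℝ)/(2*s₂) = (1/s₂)/2 by rw [div_div]; ring_nf, h]; ring
  have hhalf : (1:ℝ)/(2*s₂) + 1/(2*s₁) = 1/2 := by rw [key]; ring
  have hdd : 1/(s₁+2*r*s₁*a) + 1/(s₂+2*r*s₂*a) = 1/(1+2*r*a) := by
    have h1 : (0:ℝ) < 1 + 2*r*a := by nlinarith
    field_simp
    field_simp at hsum
    linear_combination hsum
  have h2s₁' : (1:ℝ)/(2*s₁) < 1/2 := by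
    rw [div_lt_div_iff₀ h2s₁ (by norm_num : (0:ℝ) < 2)]; linarith
  -- orbit bounds
  have hxb : ∀ i : ℕ, 1 ≤ i → i ≤ m'+1 →
      1/(2*s₂) ≤ orbitW s₁ s₂ r a i ∧ orbitW s₁ s₂ r a i < 1/2 := by
    intro i h1 h2
    rcases eq_or_lt_of_le h2 with h | h
    · subst h
      rw [horbitm]
      constructor
      · linarith [key]
      · linarith [show (0:ℝ) < 1/(2*s₁) by positivity]
    · have h3 := horbit i h1 (by omega)
      rw [Set.mem_Ico] at h3
      exact ⟨by linarith [h3.1, key], h3.2⟩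
  -- matrix entries
  have hvals : ∀ k : ℕ, k < m'+1+2 → (((k:ℕ) : Fin (m'+1+2))).val = k :=
    fun k hk => Fin.val_cast_of_lt hk
  have mulVec_eq : ∀ i : Fin (m'+1+2), (Amat s₁ s₂ r a (m'+1)).mulVec w i =
      Amat s₁ s₂ r a (m'+1) i 0 * w 0 + Amat s₁ s₂ r a (m'+1) i 1 * w 1 +
      ∑ k ∈ Finset.Icc 1 (m'+1), Amat s₁ s₂ r a (m'+1) i ((k+1:ℕ)) * w ((k+1:ℕ)) := by
    intro i
    simp only [Matrix.mulVec, dotProduct]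
    exact sum_fin_split (m'+1) _
  have hA0 : (Amat s₁ s₂ r a (m'+1)).mulVec w 0 = 1/2 * w 0 + 1/(2*s₂) * w 1 := by
    rw [mulVec_eq]
    have e2 : ∀ k ∈ Finset.Icc 1 (m'+1), Amat s₁ s₂ r a (m'+1) 0 ((k+1:ℕ)) * w ((k+1:ℕ)) = 0 := by
      intro k hk
      obtain ⟨hk1, hk2⟩ := Finset.mem_Icc.mp hk
      simp only [Amat, Matrix.of_apply, Fin.val_zero, hvals (k+1) (by omega)]
      split_ifs
      all_goals try rfl
      all_goals try ring1
      all_goals try contradiction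
      all_goals exfalso
      all_goals try omega
      all_goals simp_all
    rw [Finset.sum_eq_zero e2]
    have e0 : Amat s₁ s₂ r a (m'+1) 0 0 = 1/2 := by
      simp only [Amat, Matrix.of_apply, Fin.val_zero]
      split_ifs
      all_goals try rfl
      all_goals try ring1
      all_goals try contradiction
      all_goals exfalso
      all_goals try omega
      all_goals simp_all
    have e1 : Amat s₁ s₂ r a (m'+1) 0 1 = 1/(2*s₂) := by
      simp only [Amat, Matrix.of_apply, Fin.val_zero, Fin.val_one]
      split_ifs
      all_goals try rfl
      all_goals try ring1
      all_goals try contradiction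
      all_goals exfalso
      all_goals try omega
      all_goals simp_all
    rw [e0, e1]
    try ring
  have hA1 : (Amat s₁ s₂ r a (m'+1)).mulVec w 1 =
      1/(1+2*r*a) * w 0 + 1/(s₁+2*r*s₁*a) * w 1 + 1/(s₁+2*r*s₁*a) * w ((m'+1+1:ℕ)) := by
    rw [mulVec_eq]
    have e2 : ∀ k ∈ Finset.Icc 1 (m'+1), Amat s₁ s₂ r a (m'+1) 1 ((k+1:ℕ)) * w ((k+1:ℕ)) =
        if k = m'+1 then 1/(s₁+2*r*s₁*a) * w ((k+1:ℕ)) else 0 := by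
      intro k hk
      obtain ⟨hk1, hk2⟩ := Finset.mem_Icc.mp hk
      simp only [Amat, Matrix.of_apply, Fin.val_one, hvals (k+1) (by omega)]
      split_ifs
      all_goals try rfl
      all_goals try ring1
      all_goals try contradiction
      all_goals exfalso
      all_goals try omega
      all_goals simp_all
    rw [Finset.sum_congr rfl e2, Finset.sum_ite_eq' (Finset.Icc 1 (m'+1)) (m'+1),
        if_pos (by simp only [Finset.mem_Icc]; omega)]
    have e0 : Amat s₁ s₂ r a (m'+1) 1 0 = 1/(1+2*r*a) := by
      simp only [Amat, Matrix.of_apply, Fin.val_zero, Fin.val_one]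
      split_ifs
      all_goals try rfl
      all_goals try ring1
      all_goals try contradiction
      all_goals exfalso
      all_goals try omega
      all_goals simp_all
    have e1 : Amat s₁ s₂ r a (m'+1) 1 1 = 1/(s₁+2*r*s₁*a) := by
      simp only [Amat, Matrix.of_apply, Fin.val_one]
      split_ifs
      all_goals try rfl
      all_goals try ring1
      all_goals try contradiction
      all_goals exfalso
      all_goals try omega
      all_goals simp_all
    rw [e0, e1]
    try ring
  have hA2 : (Amat s₁ s₂ r a (m'+1)).mulVec w ((1+1:ℕ)) =
      1/(s₂+2*r*s₂*a) * (w 1 + ∑ i ∈ Finset.Icc 1 (m'+1), w ((i+1:ℕ))) := by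
    rw [mulVec_eq]
    have e2 : ∀ k ∈ Finset.Icc 1 (m'+1), Amat s₁ s₂ r a (m'+1) ((1+1:ℕ)) ((k+1:ℕ)) * w ((k+1:ℕ)) =
        1/(s₂+2*r*s₂*a) * w ((k+1:ℕ)) := by
      intro k hk
      obtain ⟨hk1, hk2⟩ := Finset.mem_Icc.mp hk
      simp only [Amat, Matrix.of_apply, hvals (1+1) (by omega), hvals (k+1) (by omega)]
      split_ifs
      all_goals try rfl
      all_goals try ring1
      all_goals try contradiction
      all_goals exfalso
      all_goals try omega
      all_goals simp_all
    rw [Finset.sum_congr rfl e2, ← Finset.mul_sum]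
    have e0 : Amat s₁ s₂ r a (m'+1) ((1+1:ℕ)) 0 = 0 := by
      simp only [Amat, Matrix.of_apply, hvals (1+1) (by omega), Fin.val_zero]
      split_ifs
      all_goals try rfl
      all_goals try ring1
      all_goals try contradiction
      all_goals exfalso
      all_goals try omega
      all_goals simp_all
    have e1 : Amat s₁ s₂ r a (m'+1) ((1+1:ℕ)) 1 = 1/(s₂+2*r*s₂*a) := by
      simp only [Amat, Matrix.of_apply, hvals (1+1) (by omega), Fin.val_one]
      split_ifs
      all_goals try rfl
      all_goals try ring1
      all_goals try contradiction
      all_goals exfalso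
      all_goals try omega
      all_goals simp_all
    rw [e0, e1]
    try ring
  have hAi : ∀ i : ℕ, 2 ≤ i → i ≤ m'+1 → (Amat s₁ s₂ r a (m'+1)).mulVec w ((i+1:ℕ)) =
      1/(s₁+2*r*s₁*a) * w ((i:ℕ)) := by
    intro i h2 h3
    rw [mulVec_eq]
    have e2 : ∀ k ∈ Finset.Icc 1 (m'+1), Amat s₁ s₂ r a (m'+1) ((i+1:ℕ)) ((k+1:ℕ)) * w ((k+1:ℕ)) =
        if k = i-1 then 1/(s₁+2*r*s₁*a) * w ((k+1:ℕ)) else 0 := by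
      intro k hk
      obtain ⟨hk1, hk2⟩ := Finset.mem_Icc.mp hk
      simp only [Amat, Matrix.of_apply, hvals (i+1) (by omega), hvals (k+1) (by omega)]
      split_ifs
      all_goals try rfl
      all_goals try ring1
      all_goals try contradiction
      all_goals exfalso
      all_goals try omega
      all_goals simp_all
    have e0 : Amat s₁ s₂ r a (m'+1) ((i+1:ℕ)) 0 = 0 := by
      simp only [Amat, Matrix.of_apply, hvals (i+1) (by omega), Fin.val_zero]
      split_ifs
      all_goals try rfl
      all_goals try ring1
      all_goals try contradiction
      all_goals exfalso
      all_goals try omega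
      all_goals simp_all
    have e1 : Amat s₁ s₂ r a (m'+1) ((i+1:ℕ)) 1 = 0 := by
      simp only [Amat, Matrix.of_apply, hvals (i+1) (by omega), Fin.val_one]
      split_ifs
      all_goals try rfl
      all_goals try ring1
      all_goals try contradiction
      all_goals exfalso
      all_goals try omega
      all_goals simp_all
    rw [Finset.sum_congr rfl e2, Finset.sum_ite_eq' (Finset.Icc 1 (m'+1)) (i-1),
        if_pos (by simp only [Finset.mem_Icc]; omega), e0, e1, show i-1+1 = i by omega]
    ring
  -- pass to pointwise statement
  have h0 : ∀ᵐ (x:ℝ) ∂(volume : Measure ℝ), x ≠ 0 := by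
    rw [MeasureTheory.ae_iff]; simp
  filter_upwards [MeasureTheory.ae_restrict_mem measurableSet_Icc,
    MeasureTheory.ae_restrict_of_ae h0] with x hx hx0
  obtain ⟨hx1, hx2⟩ := hx
  have hx0' : (0:ℝ) < x := lt_of_le_of_ne hx1 (Ne.symm hx0)
  simp only [Pa]
  -- chunk 1 : f ((1-x)/(2 s₂)) = w 0 + w 1
  have e11 : (Set.Icc (0:ℝ) (1 / 2 + r * a)).indicator (fun _ => (1:ℝ)) ((1 - x) / (2 * s₂)) = 1 := by
    refine ind_one (div_nonneg (by linarith) h2s₂.le) ?_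
    rw [div_le_iff₀ h2s₂]
    nlinarith only [mul_pos hra0 hs₂0, hx1, hs₂]
  have e12 : ∀ i ∈ Finset.Icc 1 (m'+1), w ((i + 1 : ℕ)) *
      (Set.Icc (orbitW s₁ s₂ r a i) (1 / 2 + r * a)).indicator (fun _ => (1:ℝ)) ((1 - x) / (2 * s₂)) = 0 := by
    intro i hi
    obtain ⟨hi1, hi2⟩ := Finset.mem_Icc.mp hi
    have hb := (hxb i hi1 hi2).1
    have hlt : (1 - x) / (2 * s₂) < orbitW s₁ s₂ r a i := by
      have h' : (1 - x) / (2 * s₂) < 1 / (2 * s₂) := by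
        rw [div_lt_div_iff₀ h2s₂ h2s₂]
        nlinarith only [mul_pos hx0' h2s₂]
      linarith only [h', hb]
    rw [ind_zero_left hlt, mul_zero]
  have H1 : w 0 + w 1 * (Set.Icc (0:ℝ) (1 / 2 + r * a)).indicator (fun _ => (1:ℝ)) ((1 - x) / (2 * s₂)) +
      ∑ i ∈ Finset.Icc 1 (m'+1), w ((i + 1 : ℕ)) *
        (Set.Icc (orbitW s₁ s₂ r a i) (1 / 2 + r * a)).indicator (fun _ => (1:ℝ)) ((1 - x) / (2 * s₂))
      = w 0 + w 1 := by
    rw [e11, Finset.sum_eq_zero e12]; ring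
  -- chunk 4 : f ((x-1)/(2 s₁) + 1) = w 0
  have hy4 : 1 / 2 + r * a < (x - 1) / (2 * s₁) + 1 := by
    have hcancel : (1:ℝ)/(2*s₁) * (2*s₁) = 1 := div_mul_cancel₀ 1 (ne_of_gt h2s₁)
    have h' : -(1/(2*s₁)) ≤ (x - 1) / (2 * s₁) :=
      (le_div_iff₀ h2s₁).mpr (by nlinarith only [hcancel, hx1])
    have hkey2 : r * a < 1/2 - 1/(2*s₁) := by linarith only [hra, key]
    linarith only [h', hkey2]
  have H4 : w 0 + w 1 * (Set.Icc (0:ℝ) (1 / 2 + r * a)).indicator (fun _ => (1:ℝ)) ((x - 1) / (2 * s₁) + 1) +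
      ∑ i ∈ Finset.Icc 1 (m'+1), w ((i + 1 : ℕ)) *
        (Set.Icc (orbitW s₁ s₂ r a i) (1 / 2 + r * a)).indicator (fun _ => (1:ℝ)) ((x - 1) / (2 * s₁) + 1)
      = w 0 := by
    rw [ind_zero_right hy4,
        Finset.sum_eq_zero (fun i _ => by rw [ind_zero_right hy4, mul_zero])]
    ring
  rcases le_or_gt x (1 / 2 + r * a) with hxb' | hxb'
  · -- case x ≤ 1/2 + r a
    have e0 : (Set.Icc (0:ℝ) (1 / 2 + r * a)).indicator (fun _ => (1:ℝ)) x = 1 := ind_one hx1 hxb'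
    -- chunk 2 analysis
    have hy2nn : (0:ℝ) ≤ x / (s₁ + 2 * r * s₁ * a) := div_nonneg hx1 hd₁.le
    have hq : (1/2 + r*a)/(s₁+2*r*s₁*a) = 1/(2*s₁) := by
      rw [div_eq_div_iff (ne_of_gt hd₁) (ne_of_gt h2s₁)]; ring
    have hxd : x / (s₁+2*r*s₁*a) ≤ (1/2+r*a)/(s₁+2*r*s₁*a) := by
      rw [div_le_div_iff₀ hd₁ hd₁]
      nlinarith only [mul_nonneg (sub_nonneg.mpr hxb') hd₁.le]
    have hy2b : x / (s₁ + 2 * r * s₁ * a) + 1 / 2 - 1 / (2 * s₁) ≤ 1 / 2 + r * a := by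
      linarith only [hxd, hq, hra0]
    have e21 : (Set.Icc (0:ℝ) (1 / 2 + r * a)).indicator (fun _ => (1:ℝ))
        (x / (s₁ + 2 * r * s₁ * a) + 1 / 2 - 1 / (2 * s₁)) = 1 :=
      ind_one (by linarith only [hy2nn, h2s₁']) hy2b
    have hiff₂ : ∀ A : ℝ, (A ≤ x / (s₁ + 2 * r * s₁ * a) + 1 / 2 - 1 / (2 * s₁)) ↔
        ((s₁ + 2 * r * s₁ * a) * (A - 1 / 2 + 1 / (2 * s₁)) ≤ x) := by
      intro A
      constructor <;> intro h
      · have h' := (le_div_iff₀ hd₁).mp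
          (show A + 1/(2*s₁) - 1/2 ≤ x / (s₁ + 2 * r * s₁ * a) by linarith only [h])
        linarith only [h']
      · have h' : A + 1/(2*s₁) - 1/2 ≤ x / (s₁ + 2 * r * s₁ * a) :=
          (le_div_iff₀ hd₁).mpr
            (show (A + 1/(2*s₁) - 1/2) * (s₁ + 2 * r * s₁ * a) ≤ x by linarith only [h])
        linarith only [h']
    have hrec : ∀ i : ℕ, 1 ≤ i → orbitW s₁ s₂ r a (i+1) =
        (s₁ + 2 * r * s₁ * a) * (orbitW s₁ s₂ r a i - 1 / 2 + 1 / (2 * s₁)) := by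
      intro i hi
      obtain ⟨n, rfl⟩ : ∃ n, i = n + 1 := ⟨i - 1, by omega⟩
      rfl
    have e22 : ∀ i ∈ Finset.Icc 1 m', w ((i + 1 : ℕ)) *
        (Set.Icc (orbitW s₁ s₂ r a i) (1 / 2 + r * a)).indicator (fun _ => (1:ℝ))
          (x / (s₁ + 2 * r * s₁ * a) + 1 / 2 - 1 / (2 * s₁)) =
        w ((i + 1 : ℕ)) *
        (Set.Icc (orbitW s₁ s₂ r a (i+1)) (1 / 2 + r * a)).indicator (fun _ => (1:ℝ)) x := by
      intro i hi
      obtain ⟨hi1, hi2⟩ := Finset.mem_Icc.mp hi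
      congr 1
      apply ind_congr
      rw [hrec i hi1]
      constructor
      · rintro ⟨h1, h2⟩; exact ⟨(hiff₂ _).mp h1, hxb'⟩
      · rintro ⟨h1, h2⟩; exact ⟨(hiff₂ _).mpr h1, hy2b⟩
    have etop : (Set.Icc (orbitW s₁ s₂ r a (m'+1)) (1 / 2 + r * a)).indicator (fun _ => (1:ℝ))
        (x / (s₁ + 2 * r * s₁ * a) + 1 / 2 - 1 / (2 * s₁)) = 1 := by
      refine ind_one ?_ hy2b
      rw [horbitm]
      linarith only [hy2nn]
    have reidx : ∑ i ∈ Finset.Icc 1 m', w ((i + 1 : ℕ)) *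
        (Set.Icc (orbitW s₁ s₂ r a (i+1)) (1 / 2 + r * a)).indicator (fun _ => (1:ℝ)) x =
        ∑ j ∈ Finset.Icc 2 (m'+1), w ((j : ℕ)) *
        (Set.Icc (orbitW s₁ s₂ r a j) (1 / 2 + r * a)).indicator (fun _ => (1:ℝ)) x := by
      refine Finset.sum_nbij' (fun i => i+1) (fun j => j-1) ?_ ?_ ?_ ?_ ?_ <;> intro c hc
      · simp only [Finset.mem_Icc] at hc ⊢; omega
      · simp only [Finset.mem_Icc] at hc ⊢; omega
      · show c + 1 - 1 = c; omega
      · show c - 1 + 1 = c; simp only [Finset.mem_Icc] at hc; omega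
      · simp only []
    have H2 : w 0 + w 1 * (Set.Icc (0:ℝ) (1 / 2 + r * a)).indicator (fun _ => (1:ℝ))
          (x / (s₁ + 2 * r * s₁ * a) + 1 / 2 - 1 / (2 * s₁)) +
        ∑ i ∈ Finset.Icc 1 (m'+1), w ((i + 1 : ℕ)) *
          (Set.Icc (orbitW s₁ s₂ r a i) (1 / 2 + r * a)).indicator (fun _ => (1:ℝ))
            (x / (s₁ + 2 * r * s₁ * a) + 1 / 2 - 1 / (2 * s₁))
        = w 0 + w 1 + (w ((m' + 1 + 1 : ℕ)) +
          ∑ j ∈ Finset.Icc 2 (m'+1), w ((j : ℕ)) *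
            (Set.Icc (orbitW s₁ s₂ r a j) (1 / 2 + r * a)).indicator (fun _ => (1:ℝ)) x) := by
      rw [e21, Finset.sum_Icc_succ_top (show (1:ℕ) ≤ m'+1 by omega),
          Finset.sum_congr rfl e22, etop, reidx]
      ring
    -- chunk 3 analysis
    have hq2 : (1/2 + r*a)/(s₂+2*r*s₂*a) = 1/(2*s₂) := by
      rw [div_eq_div_iff (ne_of_gt hd₂) (ne_of_gt h2s₂)]; ring
    have hxd2 : x / (s₂+2*r*s₂*a) ≤ (1/2+r*a)/(s₂+2*r*s₂*a) := by
      rw [div_le_div_iff₀ hd₂ hd₂]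
      nlinarith only [mul_nonneg (sub_nonneg.mpr hxb') hd₂.le]
    have hy3l : (1:ℝ)/2 ≤ 1 / 2 + 1 / (2 * s₂) - x / (s₂ + 2 * r * s₂ * a) := by
      linarith only [hxd2, hq2]
    have hiff₃ : (1 / 2 + 1 / (2 * s₂) - x / (s₂ + 2 * r * s₂ * a) ≤ 1 / 2 + r * a) ↔
        orbitW s₁ s₂ r a 1 ≤ x := by
      rw [show orbitW s₁ s₂ r a 1 =
        (s₂ + 2 * r * s₂ * a) * (1 / 2 + 1 / (2 * s₂) - (1 / 2 + r * a)) from rfl]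
      constructor <;> intro h
      · have h' := (le_div_iff₀ hd₂).mp
          (show 1/2 + 1/(2*s₂) - (1/2 + r*a) ≤ x / (s₂ + 2 * r * s₂ * a) by linarith only [h])
        linarith only [h']
      · have h' : 1/2 + 1/(2*s₂) - (1/2 + r*a) ≤ x / (s₂ + 2 * r * s₂ * a) :=
          (le_div_iff₀ hd₂).mpr
            (show (1/2 + 1/(2*s₂) - (1/2 + r*a)) * (s₂ + 2 * r * s₂ * a) ≤ x by linarith only [h])
        linarith only [h']
    have e31 : (Set.Icc (0:ℝ) (1 / 2 + r * a)).indicator (fun _ => (1:ℝ))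
        (1 / 2 + 1 / (2 * s₂) - x / (s₂ + 2 * r * s₂ * a)) =
        (Set.Icc (orbitW s₁ s₂ r a 1) (1 / 2 + r * a)).indicator (fun _ => (1:ℝ)) x := by
      apply ind_congr
      constructor
      · rintro ⟨h1, h2⟩; exact ⟨hiff₃.mp h2, hxb'⟩
      · rintro ⟨h1, h2⟩; exact ⟨by linarith only [hy3l], hiff₃.mpr h1⟩
    have e32 : ∀ i ∈ Finset.Icc 1 (m'+1), w ((i + 1 : ℕ)) *
        (Set.Icc (orbitW s₁ s₂ r a i) (1 / 2 + r * a)).indicator (fun _ => (1:ℝ))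
          (1 / 2 + 1 / (2 * s₂) - x / (s₂ + 2 * r * s₂ * a)) =
        w ((i + 1 : ℕ)) *
        (Set.Icc (orbitW s₁ s₂ r a 1) (1 / 2 + r * a)).indicator (fun _ => (1:ℝ)) x := by
      intro i hi
      obtain ⟨hi1, hi2⟩ := Finset.mem_Icc.mp hi
      have hb := hxb i hi1 hi2
      congr 1
      apply ind_congr
      constructor
      · rintro ⟨h1, h2⟩; exact ⟨hiff₃.mp h2, hxb'⟩
      · rintro ⟨h1, h2⟩; exact ⟨by linarith only [hb.2, hy3l], hiff₃.mpr h1⟩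
    have H3 : w 0 + w 1 * (Set.Icc (0:ℝ) (1 / 2 + r * a)).indicator (fun _ => (1:ℝ))
          (1 / 2 + 1 / (2 * s₂) - x / (s₂ + 2 * r * s₂ * a)) +
        ∑ i ∈ Finset.Icc 1 (m'+1), w ((i + 1 : ℕ)) *
          (Set.Icc (orbitW s₁ s₂ r a i) (1 / 2 + r * a)).indicator (fun _ => (1:ℝ))
            (1 / 2 + 1 / (2 * s₂) - x / (s₂ + 2 * r * s₂ * a))
        = w 0 + (w 1 + ∑ i ∈ Finset.Icc 1 (m'+1), w ((i + 1 : ℕ))) *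
            (Set.Icc (orbitW s₁ s₂ r a 1) (1 / 2 + r * a)).indicator (fun _ => (1:ℝ)) x := by
      rw [e31, Finset.sum_congr rfl e32, ← Finset.sum_mul]
      ring
    -- RHS sum
    have HR : ∑ i ∈ Finset.Icc 1 (m'+1), (Amat s₁ s₂ r a (m'+1)).mulVec w ((i + 1 : ℕ)) *
        (Set.Icc (orbitW s₁ s₂ r a i) (1 / 2 + r * a)).indicator (fun _ => (1:ℝ)) x =
        (Amat s₁ s₂ r a (m'+1)).mulVec w ((1 + 1 : ℕ)) *
          (Set.Icc (orbitW s₁ s₂ r a 1) (1 / 2 + r * a)).indicator (fun _ => (1:ℝ)) x +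
        1/(s₁+2*r*s₁*a) * ∑ j ∈ Finset.Icc 2 (m'+1), w ((j : ℕ)) *
          (Set.Icc (orbitW s₁ s₂ r a j) (1 / 2 + r * a)).indicator (fun _ => (1:ℝ)) x := by
      rw [show Finset.Icc 1 (m'+1) = insert 1 (Finset.Icc 2 (m'+1)) from by
            ext z; simp [Finset.mem_Icc]; omega,
          Finset.sum_insert (by simp)]
      congr 1
      rw [Finset.mul_sum]
      refine Finset.sum_congr rfl fun j hj => ?_
      obtain ⟨hj1, hj2⟩ := Finset.mem_Icc.mp hj
      rw [hAi j hj1 hj2]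
      ring
    rw [H1, H2, H3, H4, e0, HR, hA0, hA1, hA2]
    linear_combination (w 0) * hhalf + (w 0) * hdd
  · -- case 1/2 + r a < x
    have e0 : (Set.Icc (0:ℝ) (1 / 2 + r * a)).indicator (fun _ => (1:ℝ)) x = 0 :=
      ind_zero_right hxb'
    have eR : ∀ i ∈ Finset.Icc 1 (m'+1), (Amat s₁ s₂ r a (m'+1)).mulVec w ((i + 1 : ℕ)) *
        (Set.Icc (orbitW s₁ s₂ r a i) (1 / 2 + r * a)).indicator (fun _ => (1:ℝ)) x = 0 := by
      intro i hi
      rw [ind_zero_right hxb', mul_zero]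
    rw [H1, H4, e0, Finset.sum_eq_zero eR, hA0]
    linear_combination (w 0) * hhalf
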